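/- arXiv:2310.18020 — 4 statements merged into one kernel-verified Lean document; each statement's English description precedes it below -/
import Mathlib

section
/- Let A be a positive semidefinite N×N complex Hermitian matrix with all entries in the closed disc of radius ρ centered at 0. Then equality holds in the Loewner inequality A^{∘M} ≤ 𝒞·h[A] (that is, 𝒞·h[A] − A^{∘M} = 0) if and only if either N = 1 and A is the 1×1 matrix with entry ρ, or n₀ > 0 and A is the zero matrix. -/
open Matrix BigOperators
open scoped ComplexOrder

/-- The Vandermonde-type product V(m) = ∏_{k<l} (m_l - m_k). -/
noncomputable def Vdm (N : ℕ) (m : Fin N → ℝ) : ℝ :=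
  ∏ p ∈ Finset.univ.filter (fun p : Fin N × Fin N => p.1 < p.2), (m p.2 - m p.1)

/-- The tuple 𝐧_j: 𝐧 with n_j removed and M appended. -/
noncomputable def njTuple (N : ℕ) (n : Fin N → ℝ) (M : ℝ) (j : Fin N) : Fin N → ℝ :=
  fun i => if (i : ℕ) < (j : ℕ) then n i
    else if h : (i : ℕ) + 1 < N then n ⟨(i : ℕ) + 1, h⟩ else M

/-- Entrywise k-th power of a complex matrix (with 0^0 = 1). -/
def hPow {N : ℕ} (A : Matrix (Fin N) (Fin N) ℂ) (k : ℕ) : Matrix (Fin N) (Fin N) ℂ :=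
  Matrix.of fun i j => A i j ^ k

/-- The sharp constant 𝒞. -/
noncomputable def CCgen (N : ℕ) (n : Fin N → ℕ) (M : ℕ) (ρ : ℝ) (c : Fin N → ℝ) : ℝ :=
  ∑ j : Fin N, Vdm N (njTuple N (fun i => (n i : ℝ)) (M : ℝ) j) ^ 2
      / Vdm N (fun i => (n i : ℝ)) ^ 2 * ρ ^ (M - n j) / c j

/-- h[A] = Σ_j c_j A^{∘n_j}. -/
noncomputable def hMat {N : ℕ} (n : Fin N → ℕ) (c : Fin N → ℝ)
    (A : Matrix (Fin N) (Fin N) ℂ) : Matrix (Fin N) (Fin N) ℂ :=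
  ∑ j : Fin N, (c j : ℂ) • hPow A (n j)

section helpers

lemma Vdm_pos {N : ℕ} {m : Fin N → ℝ} (h : StrictMono m) : 0 < Vdm N m :=
  Finset.prod_pos fun _ hp => sub_pos.2 (h (Finset.mem_filter.1 hp).2)

lemma Vdm_mono {N : ℕ} {m m' : Fin N → ℝ}
    (h : ∀ p : Fin N × Fin N, p.1 < p.2 → 0 ≤ m p.2 - m p.1 ∧ m p.2 - m p.1 ≤ m' p.2 - m' p.1) :
    Vdm N m ≤ Vdm N m' :=
  Finset.prod_le_prod (fun p hp => (h p (Finset.mem_filter.1 hp).2).1)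
    (fun p hp => (h p (Finset.mem_filter.1 hp).2).2)

lemma Vdm_one (m : Fin 1 → ℝ) : Vdm 1 m = 1 := by
  unfold Vdm
  rw [Finset.filter_eq_empty_iff.2, Finset.prod_empty]
  intro p _
  omega

lemma Vdm_base_pos {N : ℕ} (n₀ : ℕ) :
    (0:ℝ) < Vdm N (fun i : Fin N => ((n₀ + (i : ℕ) : ℕ) : ℝ)) := by
  apply Vdm_pos
  intro a b hab
  show ((n₀ + (a : ℕ) : ℕ) : ℝ) < ((n₀ + (b : ℕ) : ℕ) : ℝ)
  exact_mod_cast Nat.add_lt_add_left hab n₀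

lemma njTuple_strictMono {N : ℕ} (n₀ M : ℕ) (hM : ∀ j : Fin N, n₀ + (j : ℕ) < M) (j : Fin N) :
    StrictMono (njTuple N (fun i : Fin N => ((n₀ + (i : ℕ) : ℕ) : ℝ)) (M : ℝ) j) := by
  intro i₁ i₂ h
  have h' : (i₁ : ℕ) < (i₂ : ℕ) := h
  have key : ∀ i : Fin N, (njTuple N (fun i : Fin N => ((n₀ + (i : ℕ) : ℕ) : ℝ)) (M : ℝ) j) i
      = if (i : ℕ) < (j : ℕ) then ((n₀ + (i : ℕ) : ℕ) : ℝ)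
        else if (i : ℕ) + 1 < N then ((n₀ + (i : ℕ) + 1 : ℕ) : ℝ) else (M : ℝ) := by
    intro i; unfold njTuple; split_ifs <;> rfl
  rw [key, key]
  have hcast : ∀ a b : ℕ, a < b → (a : ℝ) < (b : ℝ) := fun a b hab => by exact_mod_cast hab
  have hM' : ∀ k : ℕ, k < N → (n₀ + k : ℕ) < M := fun k hk => by simpa using hM ⟨k, hk⟩
  have hi2 := i₂.isLt
  split_ifs <;>
    first
      | (exact hcast _ _ (by omega))
      | (exact hcast _ _ (by have := hM' i₁ i₁.isLt; have := hM' ((i₁:ℕ)+1) (by omega); omega))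

lemma CC_term_pos {N : ℕ} (n₀ M : ℕ) (hM : ∀ j : Fin N, n₀ + (j : ℕ) < M)
    (ρ : ℝ) (hρ : 0 < ρ) (c : Fin N → ℝ) (hc : ∀ j, 0 < c j) (j : Fin N) :
    0 < Vdm N (njTuple N (fun i => ((n₀ + (i : ℕ) : ℕ) : ℝ)) (M : ℝ) j) ^ 2
      / Vdm N (fun i => ((n₀ + (i : ℕ) : ℕ) : ℝ)) ^ 2 * ρ ^ (M - (n₀ + (j:ℕ))) / c j := by
  have h1 := Vdm_pos (njTuple_strictMono n₀ M hM j)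
  have h2 := Vdm_base_pos (N := N) n₀
  have h3 := hc j
  positivity

lemma CC_pos {N : ℕ} (hN : 1 ≤ N) (n₀ M : ℕ) (hM : ∀ j : Fin N, n₀ + (j : ℕ) < M)
    (ρ : ℝ) (hρ : 0 < ρ) (c : Fin N → ℝ) (hc : ∀ j, 0 < c j) :
    0 < CCgen N (fun j => n₀ + (j : ℕ)) M ρ c := by
  apply Finset.sum_pos
  · intro j _; exact CC_term_pos n₀ M hM ρ hρ c hc j
  · exact Finset.univ_nonempty_iff.2 ⟨⟨0, hN⟩⟩

lemma CC_gt {N : ℕ} (hN : 2 ≤ N) (n₀ M : ℕ) (hM : ∀ j : Fin N, n₀ + (j : ℕ) < M)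
    (ρ : ℝ) (hρ : 0 < ρ) (c : Fin N → ℝ) (hc : ∀ j, 0 < c j) :
    ρ ^ (M - (n₀ + ((⟨N - 1, by omega⟩ : Fin N) : ℕ))) / c ⟨N - 1, by omega⟩
      < CCgen N (fun j => n₀ + (j : ℕ)) M ρ c := by
  set L : Fin N := ⟨N - 1, by omega⟩ with hLdef
  have hLval : (L : ℕ) = N - 1 := rfl
  have key : ∀ i : Fin N, (njTuple N (fun i : Fin N => ((n₀ + (i : ℕ) : ℕ) : ℝ)) (M : ℝ) L) i
      = if (i : ℕ) < N - 1 then ((n₀ + (i : ℕ) : ℕ) : ℝ) else (M : ℝ) := by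
    intro i
    have hi := i.isLt
    unfold njTuple
    rw [hLval]
    split_ifs <;> first | rfl | omega | (exfalso; omega)
  have hcmp : Vdm N (fun i : Fin N => ((n₀ + (i : ℕ) : ℕ) : ℝ))
      ≤ Vdm N (njTuple N (fun i => ((n₀ + (i : ℕ) : ℕ) : ℝ)) (M : ℝ) L) := by
    apply Vdm_mono
    intro p hp
    have hkl : (p.1 : ℕ) < (p.2 : ℕ) := hp
    rw [key, key]
    constructor
    · have : ((n₀ + (p.1 : ℕ) : ℕ) : ℝ) ≤ ((n₀ + (p.2 : ℕ) : ℕ) : ℝ) := by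
        exact_mod_cast by omega
      linarith
    · have hk1 : (p.1 : ℕ) < N - 1 := by have := p.2.isLt; omega
      rw [if_pos hk1]
      by_cases hl : (p.2 : ℕ) < N - 1
      · rw [if_pos hl]
      · rw [if_neg hl]
        have : ((n₀ + (p.2 : ℕ) : ℕ) : ℝ) ≤ (M : ℝ) := by exact_mod_cast (hM p.2).le
        linarith
  have hVL := Vdm_pos (njTuple_strictMono n₀ M hM L)
  have hVb := Vdm_base_pos (N := N) n₀
  have hratio : (1:ℝ) ≤ Vdm N (njTuple N (fun i => ((n₀ + (i : ℕ) : ℕ) : ℝ)) (M : ℝ) L) ^ 2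
      / Vdm N (fun i : Fin N => ((n₀ + (i : ℕ) : ℕ) : ℝ)) ^ 2 := by
    rw [le_div_iff₀ (by positivity), one_mul]
    exact pow_le_pow_left₀ hVb.le hcmp 2
  have hLterm : ρ ^ (M - (n₀ + (L:ℕ))) / c L
      ≤ Vdm N (njTuple N (fun i => ((n₀ + (i : ℕ) : ℕ) : ℝ)) (M : ℝ) L) ^ 2
        / Vdm N (fun i : Fin N => ((n₀ + (i : ℕ) : ℕ) : ℝ)) ^ 2 * ρ ^ (M - (n₀ + (L:ℕ))) / c L := by
    have hcL := hc L
    gcongr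
    exact le_mul_of_one_le_left (by positivity) hratio
  have hS : (⟨0, by omega⟩ : Fin N) ≠ L := by
    simp only [hLdef, ne_eq, Fin.mk.injEq]
    omega
  calc ρ ^ (M - (n₀ + (L:ℕ))) / c L
      ≤ _ := hLterm
    _ < CCgen N (fun j => n₀ + (j : ℕ)) M ρ c := by
        unfold CCgen
        exact Finset.single_lt_sum hS (Finset.mem_univ _) (Finset.mem_univ _)
          (CC_term_pos n₀ M hM ρ hρ c hc _)
          (fun k _ _ => (CC_term_pos n₀ M hM ρ hρ c hc k).le)

/-- the key strict scalar inequality for N ≥ 2 -/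
lemma scalar_lt {N : ℕ} (hN : 2 ≤ N) (n₀ M : ℕ) (hM : ∀ j : Fin N, n₀ + (j : ℕ) < M)
    (ρ : ℝ) (hρ : 0 < ρ) (c : Fin N → ℝ) (hc : ∀ j, 0 < c j)
    {a : ℝ} (ha : 0 < a) (haρ : a ≤ ρ) :
    a ^ M < CCgen N (fun j => n₀ + (j : ℕ)) M ρ c * ∑ j : Fin N, c j * a ^ (n₀ + (j:ℕ)) := by
  set L : Fin N := ⟨N - 1, by omega⟩ with hLdef
  set CC := CCgen N (fun j => n₀ + (j : ℕ)) M ρ c with hCC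
  have h1 : a ^ M ≤ ρ ^ (M - (n₀ + (L:ℕ))) * a ^ (n₀ + (L:ℕ)) := by
    have he : a ^ M = a ^ (M - (n₀ + (L:ℕ))) * a ^ (n₀ + (L:ℕ)) := by
      rw [← pow_add, Nat.sub_add_cancel (hM L).le]
    rw [he]
    exact mul_le_mul_of_nonneg_right (pow_le_pow_left₀ ha.le haρ _) (by positivity)
  have h3 : ρ ^ (M - (n₀ + (L:ℕ))) < CC * c L :=
    (div_lt_iff₀ (hc L)).1 (CC_gt hN n₀ M hM ρ hρ c hc)
  have h2 : ρ ^ (M - (n₀ + (L:ℕ))) * a ^ (n₀ + (L:ℕ)) < CC * (c L * a ^ (n₀ + (L:ℕ))) := by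
    rw [← mul_assoc]
    exact mul_lt_mul_of_pos_right h3 (by positivity)
  have h4 : CC * (c L * a ^ (n₀ + (L:ℕ))) ≤ CC * ∑ j : Fin N, c j * a ^ (n₀ + (j:ℕ)) := by
    refine mul_le_mul_of_nonneg_left ?_ (CC_pos (by omega) n₀ M hM ρ hρ c hc).le
    exact Finset.single_le_sum (f := fun j => c j * a ^ (n₀ + (j:ℕ)))
      (fun j _ => by have := hc j; positivity) (Finset.mem_univ L)
  linarith

/-- entry形 -/
lemma entry_iff {N : ℕ} (n₀ M : ℕ) (c : Fin N → ℝ) (C : ℝ)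
    (A : Matrix (Fin N) (Fin N) ℂ) :
    ((C : ℂ) • hMat (fun j => n₀ + (j : ℕ)) c A - hPow A M = 0) ↔
      ∀ i j, (C : ℂ) * (∑ k : Fin N, (c k : ℂ) * A i j ^ (n₀ + (k:ℕ))) = A i j ^ M := by
  have hval : ∀ i j, ((C : ℂ) • hMat (fun j => n₀ + (j : ℕ)) c A - hPow A M) i j
      = (C : ℂ) * (∑ k : Fin N, (c k : ℂ) * A i j ^ (n₀ + (k:ℕ))) - A i j ^ M := by
    intro i j
    simp [hMat, hPow, Matrix.sub_apply, Matrix.smul_apply, Matrix.sum_apply, smul_eq_mul]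
  constructor
  · intro h i j
    have := congrFun (congrFun h i) j
    rw [hval i j] at this
    exact sub_eq_zero.1 this
  · intro h
    ext i j
    rw [Matrix.zero_apply, hval i j, sub_eq_zero]
    exact h i j

end helpers

theorem stmt3 (N : ℕ) (hN : 1 ≤ N) (ρ : ℝ) (hρ : 0 < ρ) (n₀ M : ℕ)
    (hM : ∀ j : Fin N, n₀ + (j : ℕ) < M) (c : Fin N → ℝ) (hc : ∀ j, 0 < c j)
    (A : Matrix (Fin N) (Fin N) ℂ) (hA : A.PosSemidef)
    (hbound : ∀ i j, ‖A i j‖ ≤ ρ) :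
    (((CCgen N (fun j => n₀ + (j : ℕ)) M ρ c : ℝ) : ℂ) •
        hMat (fun j => n₀ + (j : ℕ)) c A - hPow A M = 0) ↔
      ((N = 1 ∧ A = Matrix.of fun _ _ => (ρ : ℂ)) ∨ (0 < n₀ ∧ A = 0)) := by
  have hM0 : 0 < M := by have := hM ⟨0, hN⟩; omega
  set CC := CCgen N (fun j => n₀ + (j : ℕ)) M ρ c with hCCdef
  have hCCpos : 0 < CC := CC_pos hN n₀ M hM ρ hρ c hc
  rw [entry_iff]
  constructor
  · intro h
    -- decompose A
    obtain ⟨B, hB⟩ : ∃ B : Matrix (Fin N) (Fin N) ℂ, A = Bᴴ * B := by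
      open scoped MatrixOrder Matrix.Norms.L2Operator in
      obtain ⟨B, hB⟩ := CStarAlgebra.nonneg_iff_eq_star_mul_self.mp hA.nonneg
      exact ⟨B, hB⟩
    set r : Fin N → ℝ := fun i => ∑ k, Complex.normSq (B k i) with hrdef
    have hr : ∀ i, A i i = ((r i : ℝ) : ℂ) := by
      intro i
      rw [hB, Matrix.mul_apply]
      push_cast [hrdef]
      refine Finset.sum_congr rfl fun k _ => ?_
      rw [Matrix.conjTranspose_apply]
      exact (Complex.normSq_eq_conj_mul_self (z := B k i)).symm
    have hrnn : ∀ i, 0 ≤ r i := fun i => Finset.sum_nonneg fun k _ => Complex.normSq_nonneg _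
    have hrρ : ∀ i, r i ≤ ρ := by
      intro i
      have := hbound i i
      rwa [hr i, Complex.norm_real, Real.norm_of_nonneg (hrnn i)] at this
    have hreal : ∀ i, CC * (∑ k : Fin N, c k * r i ^ (n₀ + (k:ℕ))) = r i ^ M := by
      intro i
      have := h i i
      rw [hr i] at this
      exact_mod_cast this
    -- helper: all diagonal zero → A = 0
    have hzero : (∀ i, r i = 0) → A = 0 := by
      intro hz
      have hBz : ∀ k i, B k i = 0 := by
        intro k i
        have := hz i
        rw [hrdef] at this
        have h0 : Complex.normSq (B k i) = 0 :=
          (Finset.sum_eq_zero_iff_of_nonneg (fun k _ => Complex.normSq_nonneg _)).1 this k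
            (Finset.mem_univ k)
        exact Complex.normSq_eq_zero.1 h0
      rw [hB]
      ext i j
      rw [Matrix.mul_apply, Matrix.zero_apply]
      apply Finset.sum_eq_zero
      intro k _
      rw [Matrix.conjTranspose_apply, hBz k i, star_zero, zero_mul]
    rcases Nat.lt_or_ge N 2 with h2 | h2
    · -- N = 1
      have hN1 : N = 1 := by omega
      subst hN1
      have hCC1 : CC = ρ ^ (M - n₀) / c 0 := by
        rw [hCCdef]
        unfold CCgen
        simp [Vdm_one, Fin.sum_univ_one]
      have heq := hreal 0
      rw [Fin.sum_univ_one, hCC1] at heq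
      simp only [Fin.val_zero, add_zero] at heq
      rcases eq_or_lt_of_le (hrnn 0) with h0 | h0
      · -- r 0 = 0
        right
        have hr0 : r 0 = 0 := h0.symm
        constructor
        · by_contra hn0
          push_neg at hn0
          interval_cases n₀
          rw [hr0] at heq
          simp [hM0.ne', pow_zero] at heq
          rcases heq with h | h
          · exact absurd h (by positivity)
          · exact absurd h (hc 0).ne'
        · ext i j
          fin_cases i <;> fin_cases j
          simpa [hr 0, hr0] using rfl
      · -- r 0 > 0
        left
        refine ⟨rfl, ?_⟩
        have hrρ0 := hrρ 0
        have hMn : M - n₀ ≠ 0 := by have := hM 0; simp at this; omega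
        have hc0 := (hc 0).ne'
        have hpow0 : (0:ℝ) < r 0 ^ n₀ := by positivity
        have hρeq : r 0 ^ (M - n₀) = ρ ^ (M - n₀) := by
          have hsplit : r 0 ^ M = r 0 ^ (M - n₀) * r 0 ^ n₀ := by
            rw [← pow_add, Nat.sub_add_cancel (by have := hM 0; simpa using this.le)]
          have hL : ρ ^ (M - n₀) / c 0 * (c 0 * r 0 ^ n₀) = ρ ^ (M - n₀) * r 0 ^ n₀ := by
            field_simp
          rw [hL, hsplit] at heq
          exact (mul_right_cancel₀ hpow0.ne' heq).symm
        have : r 0 = ρ := by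
          by_contra hne
          have hlt : r 0 < ρ := lt_of_le_of_ne hrρ0 hne
          have := pow_lt_pow_left₀ hlt (hrnn 0) hMn
          rw [hρeq] at this
          exact lt_irrefl _ this
        ext i j
        fin_cases i <;> fin_cases j
        simp [hr 0, this]
    · -- N ≥ 2
      right
      have hz : ∀ i, r i = 0 := by
        intro i
        by_contra hri
        have hpos : 0 < r i := lt_of_le_of_ne (hrnn i) (Ne.symm hri)
        have := scalar_lt h2 n₀ M hM ρ hρ c hc hpos (hrρ i)
        rw [← hCCdef] at this
        linarith [hreal i]
      have hA0 : A = 0 := hzero hz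
      refine ⟨?_, hA0⟩
      by_contra hn0
      push_neg at hn0
      interval_cases n₀
      have h00 := h ⟨0, by omega⟩ ⟨0, by omega⟩
      rw [hA0] at h00
      simp only [Matrix.zero_apply] at h00
      rw [zero_pow hM0.ne'] at h00
      have hsum : (∑ k : Fin N, (c k : ℂ) * (0:ℂ) ^ (0 + (k:ℕ))) = (c ⟨0, by omega⟩ : ℂ) := by
        rw [Finset.sum_eq_single (⟨0, by omega⟩ : Fin N)]
        · norm_num
        · intro k _ hk
          have : (k : ℕ) ≠ 0 := fun hk0 => hk (Fin.ext hk0)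
          rw [zero_pow (by omega), mul_zero]
        · simp
      rw [hsum] at h00
      have : (CC : ℂ) ≠ 0 := by exact_mod_cast hCCpos.ne'
      have : (c ⟨0, by omega⟩ : ℂ) ≠ 0 := by exact_mod_cast (hc _).ne'
      exact absurd h00 (by
        apply mul_ne_zero
        · exact_mod_cast hCCpos.ne'
        · exact_mod_cast (hc _).ne')
  · rintro (⟨hN1, hAeq⟩ | ⟨hn0, hAeq⟩) <;> subst hAeq
    · subst hN1
      intro i j
      have hCC1 : CC = ρ ^ (M - n₀) / c 0 := by
        rw [hCCdef]; unfold CCgen; simp [Vdm_one, Fin.sum_univ_one]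
      rw [Fin.sum_univ_one, hCC1]
      simp only [Matrix.of_apply, Fin.val_zero, add_zero]
      have hreal : ρ ^ (M - n₀) / c 0 * (c 0 * ρ ^ n₀) = ρ ^ M := by
        have hc0 := (hc 0).ne'
        have hL : ρ ^ (M - n₀) / c 0 * (c 0 * ρ ^ n₀) = ρ ^ (M - n₀) * ρ ^ n₀ := by
          field_simp
        rw [hL, ← pow_add, Nat.sub_add_cancel (by have := hM 0; simpa using this.le)]
      exact_mod_cast hreal
    · intro i j
      simp only [Matrix.zero_apply]
      rw [zero_pow hM0.ne']
      rw [Finset.sum_eq_zero, mul_zero]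
      intro k _
      rw [zero_pow (by omega), mul_zero]
end

section
/- Suppose N ≥ 1 and C, D are positive semidefinite N×N complex matrices. The following are equivalent: (1) for every v ∈ ℂ^N, if v* C v = 0 then v* D v = 0; (2) the kernel of C is contained in the kernel of D; (3) there exists a constant t > 0 such that C − t·D is positive semidefinite. -/
open Matrix
open scoped ComplexOrder

namespace Stmt7Aux

variable {N : ℕ}

/-- The real quadratic form of a matrix. -/
noncomputable def q (A : Matrix (Fin N) (Fin N) ℂ) (v : Fin N → ℂ) : ℝ :=
  (star v ⬝ᵥ A *ᵥ v).re

lemma psd_eq {A : Matrix (Fin N) (Fin N) ℂ} (hA : A.PosSemidef) (v : Fin N → ℂ) :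
    star v ⬝ᵥ A *ᵥ v = (q A v : ℂ) := by
  have h := hA.dotProduct_mulVec_nonneg v
  rw [Complex.nonneg_iff] at h
  apply Complex.ext <;> simp [q, ← h.2]

lemma q_nonneg {A : Matrix (Fin N) (Fin N) ℂ} (hA : A.PosSemidef) (v : Fin N → ℂ) :
    0 ≤ q A v := by
  have h := hA.dotProduct_mulVec_nonneg v
  rw [Complex.nonneg_iff] at h
  exact h.1

lemma q_smul (A : Matrix (Fin N) (Fin N) ℂ) (c : ℂ) (v : Fin N → ℂ) :
    q A (c • v) = ‖c‖ ^ 2 * q A v := by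
  have : star (c • v) ⬝ᵥ A *ᵥ (c • v) = (star c * c) * (star v ⬝ᵥ A *ᵥ v) := by
    rw [mulVec_smul, star_smul, smul_dotProduct, dotProduct_smul]
    simp [smul_smul, mul_assoc]
  have hc : star c * c = ((‖c‖ ^ 2 : ℝ) : ℂ) := by
    rw [Complex.star_def, ← Complex.normSq_eq_conj_mul_self, Complex.normSq_eq_norm_sq]
  simp only [q, this, hc, Complex.re_ofReal_mul]

lemma cross {A : Matrix (Fin N) (Fin N) ℂ} (hA : A.IsHermitian) {u : Fin N → ℂ}
    (hu : A *ᵥ u = 0) (w : Fin N → ℂ) :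
    star (u + w) ⬝ᵥ A *ᵥ (u + w) = star w ⬝ᵥ A *ᵥ w := by
  have hvm : star u ᵥ* A = 0 := by
    have := star_mulVec A u
    rw [hu, hA.eq] at this
    simpa using this.symm
  rw [mulVec_add, hu, zero_add, star_add, add_dotProduct, dotProduct_mulVec, hvm,
    zero_dotProduct, zero_add]

lemma q_add {A : Matrix (Fin N) (Fin N) ℂ} (hA : A.IsHermitian) {u : Fin N → ℂ}
    (hu : A *ᵥ u = 0) (w : Fin N → ℂ) : q A (u + w) = q A w := by
  simp only [q]
  rw [cross hA hu w]

lemma q_continuous (A : Matrix (Fin N) (Fin N) ℂ) :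
    Continuous fun v : EuclideanSpace ℂ (Fin N) => q A v := by
  have hcoord : ∀ i : Fin N, Continuous fun v : EuclideanSpace ℂ (Fin N) => v i :=
    fun i => (EuclideanSpace.proj (𝕜 := ℂ) i).continuous
  have : Continuous fun v : EuclideanSpace ℂ (Fin N) => star v ⬝ᵥ A *ᵥ v := by
    simp only [dotProduct, mulVec, Pi.star_apply]
    refine continuous_finset_sum _ fun i _ => Continuous.mul ?_ ?_
    · exact Complex.continuous_conj.comp (hcoord i)
    · exact continuous_finset_sum _ fun j _ => (continuous_const.mul (hcoord j))
  exact Complex.continuous_re.comp this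

lemma main {C D : Matrix (Fin N) (Fin N) ℂ} (hC : C.PosSemidef) (hD : D.PosSemidef)
    (h : ∀ v : Fin N → ℂ, C *ᵥ v = 0 → D *ᵥ v = 0) :
    ∃ t : ℝ, 0 < t ∧ ∀ v : Fin N → ℂ, t * q D v ≤ q C v := by
  classical
  set E := EuclideanSpace ℂ (Fin N)
  let L : E ≃ₗ[ℂ] (Fin N → ℂ) := WithLp.linearEquiv 2 ℂ (Fin N → ℂ)
  let K : Submodule ℂ E := (LinearMap.ker C.mulVecLin).comap (L : E →ₗ[ℂ] (Fin N → ℂ))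
  have hKmem : ∀ x : E, x ∈ K ↔ C *ᵥ (L x) = 0 := by
    intro x
    simp [K, Submodule.mem_comap, LinearMap.mem_ker, mulVecLin_apply]
  -- the key inequality on Kᗮ
  have key : ∃ t : ℝ, 0 < t ∧ ∀ w : E, w ∈ Kᗮ → t * q D (L w) ≤ q C (L w) := by
    set S : Set E := Metric.sphere 0 1 ∩ (Kᗮ : Set E) with hS
    have hScompact : IsCompact S :=
      (isCompact_sphere (0 : E) 1).inter_right (Kᗮ.closed_of_finiteDimensional)
    by_cases hSne : S.Nonempty
    · obtain ⟨w₀, hw₀S, hw₀min⟩ :=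
        hScompact.exists_isMinOn hSne ((q_continuous C).continuousOn)
      obtain ⟨w₁, hw₁S, hw₁max⟩ :=
        hScompact.exists_isMaxOn hSne ((q_continuous D).continuousOn)
      set m : ℝ := q C w₀ with hm
      set M : ℝ := q D w₁ with hM
      have hMnn : 0 ≤ M := q_nonneg hD w₁
      have hmpos : 0 < m := by
        rcases lt_or_eq_of_le (q_nonneg hC w₀) with h' | h'
        · exact h'
        · exfalso
          have hq0 : star (w₀ : Fin N → ℂ) ⬝ᵥ C *ᵥ (w₀ : Fin N → ℂ) = 0 := by
            rw [psd_eq hC, ← h']; simp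
          have hCw₀ : C *ᵥ (L w₀) = 0 := (hC.dotProduct_mulVec_zero_iff _).mp hq0
          have hw₀K : w₀ ∈ K := (hKmem w₀).mpr hCw₀
          have hw₀perp : w₀ ∈ Kᗮ := hw₀S.2
          have : w₀ = 0 := by
            have := (Submodule.mem_orthogonal Kᗮ w₀).mp ?_ w₀ hw₀perp
            · exact inner_self_eq_zero.mp this
            · exact Submodule.le_orthogonal_orthogonal K hw₀K
          have : ‖w₀‖ = 1 := by simpa using hw₀S.1
          simp_all
      refine ⟨m / (M + 1), by positivity, ?_⟩
      intro w hw
      by_cases hw0 : w = 0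
      · subst hw0
        have : q C (L (0 : E)) = 0 ∧ q D (L (0 : E)) = 0 := by
          constructor <;> simp [q]
        rw [this.1, this.2]; simp
      · set c : ℂ := (‖w‖ : ℂ) with hc
        have hcn : ‖w‖ ≠ 0 := norm_ne_zero_iff.mpr hw0
        have hc0 : c ≠ 0 := by simp [hc, hcn]
        set w' : E := c⁻¹ • w with hw'
        have hwS : w' ∈ S := by
          constructor
          · rw [hw', mem_sphere_zero_iff_norm, norm_smul]
            rw [norm_inv]
            simp [hc, abs_of_nonneg (norm_nonneg w), hcn]
          · exact Kᗮ.smul_mem _ hw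
        have hweq : w = c • w' := by
          rw [hw', smul_smul, mul_inv_cancel₀ hc0, one_smul]
        have hnormc : ‖c‖ = ‖w‖ := by
          simp [hc, abs_of_nonneg (norm_nonneg w)]
        have hLw : L w = c • (L w') := by rw [hweq, _root_.map_smul]
        have hqc : q C (L w) = ‖w‖ ^ 2 * q C (L w') := by
          rw [hLw, q_smul, hnormc]
        have hqd : q D (L w) = ‖w‖ ^ 2 * q D (L w') := by
          rw [hLw, q_smul, hnormc]
        have h1 : m ≤ q C (L w') := hw₀min hwS
        have h2 : q D (L w') ≤ M := hw₁max hwS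
        have h3 : 0 ≤ q D (L w') := q_nonneg hD _
        rw [hqc, hqd]
        have hsq : (0:ℝ) ≤ ‖w‖ ^ 2 := sq_nonneg _
        have hfrac : m / (M + 1) * q D (L w') ≤ m := by
          have : m / (M + 1) * q D (L w') ≤ m / (M + 1) * (M + 1) := by
            apply mul_le_mul_of_nonneg_left _ (by positivity)
            linarith
          rwa [div_mul_cancel₀ _ (by linarith : (M:ℝ) + 1 ≠ 0)] at this
        calc m / (M + 1) * (‖w‖ ^ 2 * q D (L w'))
            = ‖w‖ ^ 2 * (m / (M + 1) * q D (L w')) := by ring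
          _ ≤ ‖w‖ ^ 2 * m := mul_le_mul_of_nonneg_left hfrac hsq
          _ ≤ ‖w‖ ^ 2 * q C (L w') := mul_le_mul_of_nonneg_left h1 hsq
    · -- S empty : Kᗮ = ⊥
      refine ⟨1, one_pos, ?_⟩
      intro w hw
      have hw0 : w = 0 := by
        by_contra hne
        apply hSne
        refine ⟨(‖w‖ : ℂ)⁻¹ • w, ?_, Kᗮ.smul_mem _ hw⟩
        have hcn : ‖w‖ ≠ 0 := norm_ne_zero_iff.mpr hne
        rw [mem_sphere_zero_iff_norm, norm_smul, norm_inv]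
        simp [abs_of_nonneg (norm_nonneg w), hcn]
      subst hw0
      simp [q]
  obtain ⟨t, ht, hkey⟩ := key
  refine ⟨t, ht, ?_⟩
  intro v
  obtain ⟨u, hu, w, hw, hvE⟩ := K.exists_add_mem_mem_orthogonal (L.symm v)
  have hv : v = L u + L w := by
    have := congrArg L hvE
    simpa [map_add] using this
  have hCu : C *ᵥ (L u) = 0 := (hKmem u).mp hu
  have hDu : D *ᵥ (L u) = 0 := h _ hCu
  rw [hv, q_add hC.1 hCu, q_add hD.1 hDu]
  exact hkey w hw

end Stmt7Aux

open Stmt7Aux in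
theorem stmt7 (N : ℕ) (hN : 1 ≤ N) (C D : Matrix (Fin N) (Fin N) ℂ)
    (hC : C.PosSemidef) (hD : D.PosSemidef) :
    ((∀ v : Fin N → ℂ, star v ⬝ᵥ C.mulVec v = 0 → star v ⬝ᵥ D.mulVec v = 0) ↔
      (∀ v : Fin N → ℂ, C.mulVec v = 0 → D.mulVec v = 0)) ∧
    ((∀ v : Fin N → ℂ, C.mulVec v = 0 → D.mulVec v = 0) ↔
      ∃ t : ℝ, 0 < t ∧ (C - (t : ℂ) • D).PosSemidef) := by
  constructor
  · constructor
    · intro h v hv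
      have h1 : star v ⬝ᵥ C *ᵥ v = 0 := by rw [hv, dotProduct_zero]
      exact (hD.dotProduct_mulVec_zero_iff v).mp (h v h1)
    · intro h v hv
      have h1 : D *ᵥ v = 0 := h v ((hC.dotProduct_mulVec_zero_iff v).mp hv)
      rw [h1, dotProduct_zero]
  · constructor
    · intro h
      obtain ⟨t, ht, hkey⟩ := main hC hD h
      refine ⟨t, ht, posSemidef_iff_dotProduct_mulVec.mpr ⟨?_, ?_⟩⟩
      · rw [Matrix.IsHermitian, conjTranspose_sub, conjTranspose_smul, hC.1, hD.1]
        simp [Complex.star_def, Complex.conj_ofReal]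
      · intro x
        have hx : star x ⬝ᵥ (C - (t : ℂ) • D) *ᵥ x
            = ((q C x - t * q D x : ℝ) : ℂ) := by
          rw [sub_mulVec, dotProduct_sub, smul_mulVec, dotProduct_smul,
            psd_eq hC, psd_eq hD, smul_eq_mul]
          push_cast
          ring
        rw [hx]
        exact Complex.zero_le_real.mpr (by linarith [hkey x])
    · rintro ⟨t, ht, hPSD⟩ v hv
      have h1 := hPSD.dotProduct_mulVec_nonneg v
      rw [sub_mulVec, dotProduct_sub, smul_mulVec, dotProduct_smul, hv,
        dotProduct_zero, zero_sub, psd_eq hD, smul_eq_mul, ← Complex.ofReal_mul,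
        Complex.nonneg_iff] at h1
      have h2 : q D v = 0 := by
        have hre := h1.1
        simp only [Complex.neg_re, Complex.ofReal_re] at hre
        have := q_nonneg hD v
        nlinarith
      apply (hD.dotProduct_mulVec_zero_iff v).mp
      rw [psd_eq hD, h2]
      simp
end

section
/- Let A be a positive semidefinite N×N real symmetric matrix with nonnegative entries, where N ≥ 1, and suppose the rows of A are pairwise distinct. Then there exists a vector u ∈ [0, ∞)^N with pairwise distinct entries such that A − u uᵀ is positive semidefinite and, for each i, u_i = 0 if and only if the i-th row of A is zero. -/
open Matrix Polynomial

lemma cs_psd {N : ℕ} {A : Matrix (Fin N) (Fin N) ℝ} (hA : A.PosSemidef)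
    (x y : Fin N → ℝ) :
    (x ⬝ᵥ A *ᵥ y) ^ 2 ≤ (x ⬝ᵥ A *ᵥ x) * (y ⬝ᵥ A *ᵥ y) := by
  have hsymm : ∀ a b : Fin N → ℝ, a ⬝ᵥ A *ᵥ b = b ⬝ᵥ A *ᵥ a := by
    intro a b
    rw [Matrix.dotProduct_mulVec, ← Matrix.mulVec_transpose]
    rw [show Aᵀ = A from by simpa using hA.1.eq, dotProduct_comm]
  have key : ∀ s : ℝ, 0 ≤ (y ⬝ᵥ A *ᵥ y) * (s * s) + (2 * (x ⬝ᵥ A *ᵥ y)) * s + (x ⬝ᵥ A *ᵥ x) := by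
    intro s
    have h := hA.dotProduct_mulVec_nonneg (x + s • y)
    simp only [star_trivial] at h
    have hexp : (x + s • y) ⬝ᵥ A *ᵥ (x + s • y)
        = (y ⬝ᵥ A *ᵥ y) * (s * s) + (2 * (x ⬝ᵥ A *ᵥ y)) * s + (x ⬝ᵥ A *ᵥ x) := by
      rw [Matrix.mulVec_add, Matrix.mulVec_smul, add_dotProduct,
        smul_dotProduct, dotProduct_add, dotProduct_add,
        dotProduct_smul, dotProduct_smul, hsymm y x]
      simp only [smul_eq_mul]
      ring
    rw [hexp] at h
    exact h
  have hd := discrim_le_zero key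
  rw [discrim] at hd
  nlinarith [hd]

theorem stmt8 (N : ℕ) (hN : 1 ≤ N) (A : Matrix (Fin N) (Fin N) ℝ)
    (hA : A.PosSemidef) (hnn : ∀ i j, 0 ≤ A i j)
    (hrows : Function.Injective (fun i => A i)) :
    ∃ u : Fin N → ℝ, (∀ i, 0 ≤ u i) ∧ Function.Injective u ∧
      (A - Matrix.of fun i j => u i * u j).PosSemidef ∧
      ∀ i, (u i = 0 ↔ ∀ j, A i j = 0) := by
  by_cases hA0 : A = 0
  · -- A = 0 : then all rows are equal, so Fin N is a subsingleton, take u = 0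
    have hsub : Subsingleton (Fin N) := by
      refine ⟨fun i j => hrows ?_⟩
      show A i = A j
      rw [hA0]
      rfl
    refine ⟨fun _ => 0, fun i => le_refl 0, Function.injective_of_subsingleton _, ?_, ?_⟩
    · have : (Matrix.of fun i j : Fin N => (0:ℝ) * 0) = (0 : Matrix (Fin N) (Fin N) ℝ) := by
        ext i j; simp
      rw [this, sub_zero]
      exact hA
    · intro i
      simp [hA0]
  · -- A ≠ 0
    classical
    -- the difference polynomials
    set P : Fin N → Fin N → ℝ[X] :=
      fun i j => ∑ k : Fin N, Polynomial.C (A i k - A j k) * Polynomial.X ^ (k : ℕ) with hP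
    have hcoeff : ∀ i j (k : Fin N), (P i j).coeff (k : ℕ) = A i k - A j k := by
      intro i j k
      rw [hP]
      simp only [Polynomial.finset_sum_coeff, Polynomial.coeff_C_mul, Polynomial.coeff_X_pow]
      rw [Finset.sum_eq_single k]
      · simp
      · intro m _ hm
        have h1 : (m : ℕ) ≠ (k : ℕ) := fun h => hm (Fin.ext h)
        simp [h1, Ne.symm h1]
      · simp
    have hPne : ∀ i j, i ≠ j → P i j ≠ 0 := by
      intro i j hij h0
      apply hij
      apply hrows
      funext k
      have := hcoeff i j k
      rw [h0] at this
      simp only [Polynomial.coeff_zero] at this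
      simpa [sub_eq_zero] using this.symm
    -- the bad set of parameters t
    set Bad : Set ℝ := ⋃ i : Fin N, ⋃ j : Fin N, {t : ℝ | P i j ≠ 0 ∧ (P i j).eval t = 0}
      with hBad
    have hBadFin : Bad.Finite := by
      apply Set.finite_iUnion; intro i
      apply Set.finite_iUnion; intro j
      by_cases h : P i j = 0
      · convert Set.finite_empty
        ext t; simp [h]
      · exact (Polynomial.finite_setOf_isRoot h).subset (fun t ht => ht.2)
    obtain ⟨t, ht⟩ : (Set.Ioi (0:ℝ) \ Bad).Nonempty :=
      ((Set.Ioi_infinite 0).diff hBadFin).nonempty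
    have ht0 : 0 < t := ht.1
    -- the weight vector
    set w : Fin N → ℝ := fun k => t ^ (k : ℕ) with hw
    have hwpos : ∀ k, 0 < w k := fun k => pow_pos ht0 _
    set v : Fin N → ℝ := A *ᵥ w with hv
    have hvnn : ∀ i, 0 ≤ v i := by
      intro i
      rw [hv]
      simp only [Matrix.mulVec, dotProduct]
      exact Finset.sum_nonneg fun k _ => mul_nonneg (hnn i k) (hwpos k).le
    have hv_ne : ∀ i j, i ≠ j → v i ≠ v j := by
      intro i j hij heq
      have hnotbad : t ∉ Bad := ht.2
      have hnotroot : (P i j).eval t ≠ 0 := by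
        intro hroot
        exact hnotbad (Set.mem_iUnion.2 ⟨i, Set.mem_iUnion.2 ⟨j, ⟨hPne i j hij, hroot⟩⟩⟩)
      apply hnotroot
      have heval : (P i j).eval t = v i - v j := by
        rw [hP, hv]
        simp only [Polynomial.eval_finset_sum, Polynomial.eval_mul, Polynomial.eval_C,
          Polynomial.eval_pow, Polynomial.eval_X, Matrix.mulVec, dotProduct, hw]
        rw [← Finset.sum_sub_distrib]
        congr 1; funext k; ring
      rw [heval, heq, sub_self]
    -- positivity of q = wᵀ A w
    obtain ⟨i0, j0, hij0⟩ : ∃ i j, A i j ≠ 0 := by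
      by_contra h
      push_neg at h
      exact hA0 (by ext i j; simpa using h i j)
    have hij0' : 0 < A i0 j0 := lt_of_le_of_ne (hnn i0 j0) (Ne.symm hij0)
    have hvi0 : 0 < v i0 := by
      rw [hv]
      simp only [Matrix.mulVec, dotProduct]
      apply Finset.sum_pos' (fun k _ => mul_nonneg (hnn i0 k) (hwpos k).le)
      exact ⟨j0, Finset.mem_univ _, mul_pos hij0' (hwpos j0)⟩
    set q : ℝ := w ⬝ᵥ A *ᵥ w with hq
    have hqpos : 0 < q := by
      rw [hq]
      have : w ⬝ᵥ A *ᵥ w = ∑ i, w i * v i := by rw [hv]; rfl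
      rw [this]
      apply Finset.sum_pos' (fun i _ => mul_nonneg (hwpos i).le (hvnn i))
      exact ⟨i0, Finset.mem_univ _, mul_pos (hwpos i0) hvi0⟩
    set c : ℝ := Real.sqrt q with hc
    have hcpos : 0 < c := Real.sqrt_pos.2 hqpos
    have hcsq : c * c = q := Real.mul_self_sqrt hqpos.le
    refine ⟨fun i => c⁻¹ * v i, ?_, ?_, ?_, ?_⟩
    · intro i; exact mul_nonneg (inv_nonneg.2 hcpos.le) (hvnn i)
    · intro a b hab
      by_contra hne
      exact hv_ne a b hne (mul_left_cancel₀ (inv_ne_zero hcpos.ne') hab)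
    · refine Matrix.PosSemidef.of_dotProduct_mulVec_nonneg ?_ ?_
      · have hM : (Matrix.of fun i j => (c⁻¹ * v i) * (c⁻¹ * v j)).IsHermitian := by
          unfold Matrix.IsHermitian
          ext i j
          simp only [Matrix.conjTranspose_apply, Matrix.of_apply, star_trivial]
          ring
        exact hA.1.sub hM
      · intro x
        simp only [star_trivial]
        rw [Matrix.sub_mulVec, dotProduct_sub]
        have hS : (∑ j, (c⁻¹ * v j) * x j) = c⁻¹ * (x ⬝ᵥ A *ᵥ w) := by
          rw [← hv]
          simp only [dotProduct, Finset.mul_sum]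
          apply Finset.sum_congr rfl
          intros; ring
        have hMx : x ⬝ᵥ ((Matrix.of fun i j => (c⁻¹ * v i) * (c⁻¹ * v j)) *ᵥ x)
            = (c⁻¹ * (x ⬝ᵥ A *ᵥ w)) * (c⁻¹ * (x ⬝ᵥ A *ᵥ w)) := by
          calc x ⬝ᵥ ((Matrix.of fun i j => (c⁻¹ * v i) * (c⁻¹ * v j)) *ᵥ x)
              = ∑ i, (x i * (c⁻¹ * v i)) * (∑ j, (c⁻¹ * v j) * x j) := by
                simp only [dotProduct, Matrix.mulVec, Matrix.of_apply, Finset.mul_sum]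
                apply Finset.sum_congr rfl
                intro i _
                apply Finset.sum_congr rfl
                intros; ring
            _ = (∑ i, x i * (c⁻¹ * v i)) * (∑ j, (c⁻¹ * v j) * x j) := by
                rw [Finset.sum_mul]
            _ = (c⁻¹ * (x ⬝ᵥ A *ᵥ w)) * (c⁻¹ * (x ⬝ᵥ A *ᵥ w)) := by
                rw [hS]
                congr 1
                rw [← hS]
                apply Finset.sum_congr rfl
                intros; ring
        rw [hMx]
        have hcs := cs_psd hA x w
        have hxx : 0 ≤ x ⬝ᵥ A *ᵥ x := by simpa using hA.dotProduct_mulVec_nonneg x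
        have hc2 : c⁻¹ * c⁻¹ * q = 1 := by
          rw [← hcsq]
          field_simp
        nlinarith [hcs, hqpos, sq_nonneg (x ⬝ᵥ A *ᵥ w)]
    · intro i
      constructor
      · intro hu j
        have hv0 : v i = 0 := by
          have hu' : c⁻¹ * v i = 0 := hu
          rcases mul_eq_zero.1 hu' with h | h
          · exact absurd h (inv_ne_zero hcpos.ne')
          · exact h
        have hsum : ∑ k, A i k * w k = 0 := by
          rw [hv] at hv0
          simpa [Matrix.mulVec, dotProduct] using hv0
        have hterm := (Finset.sum_eq_zero_iff_of_nonneg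
          (fun k _ => mul_nonneg (hnn i k) (hwpos k).le)).1 hsum j (Finset.mem_univ j)
        rcases mul_eq_zero.1 hterm with h | h
        · exact h
        · exact absurd h (hwpos j).ne'
      · intro hrow
        show c⁻¹ * v i = 0
        have : v i = 0 := by
          rw [hv]
          simp only [Matrix.mulVec, dotProduct]
          exact Finset.sum_eq_zero fun k _ => by rw [hrow k, zero_mul]
        rw [this, mul_zero]
end

section
/- Let N ≥ 1 be an integer, let S be a finite set of real numbers, let c : S → ℝ, and let u ∈ (0, ∞)^N. Define the N×N matrix F[u uᵀ] with (i, j) entry Σ_{s ∈ S} c(s)·(u_i u_j)^s (real powers of positive reals). Then det F[u uᵀ] = Σ_{𝐧} (det(u^{∘𝐧}))² · ∏_{j=1}^N c(n_j), where the sum runs over all strictly increasing N-tuples 𝐧 = (n₁ < n₂ < ⋯ < n_N) with entries in S. -/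
open Matrix BigOperators

theorem stmt19 (N : ℕ) (hN : 1 ≤ N) (S : Finset ℝ) (c : ℝ → ℝ)
    (u : Fin N → ℝ) (hu : ∀ i, 0 < u i) :
    Matrix.det (Matrix.of fun i j : Fin N => ∑ s ∈ S, c s * (u i * u j) ^ s) =
      ∑ n ∈ Finset.univ.filter
          (fun n : Fin N → {x : ℝ // x ∈ S} =>
            ∀ a b : Fin N, a < b → (n a : ℝ) < (n b : ℝ)),
        (Matrix.det (Matrix.of fun i j : Fin N => u i ^ (n j : ℝ))) ^ 2 *
          ∏ j, c (n j : ℝ) := by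
  classical
  open Finset Equiv in
  set T : (Fin N → {x : ℝ // x ∈ S}) → ℝ := fun p =>
    (∏ i, c (p i : ℝ) * u i ^ ((p i) : ℝ)) *
      Matrix.det (Matrix.of fun a b : Fin N => u a ^ ((p b : ℝ))) with hTdef
  -- Step 1: multilinear expansion of the determinant
  have step1 : Matrix.det (Matrix.of fun i j : Fin N => ∑ s ∈ S, c s * (u i * u j) ^ s)
      = ∑ p : Fin N → {x : ℝ // x ∈ S}, T p := by
    have hentry : ∀ a b : Fin N, (∑ s ∈ S, c s * (u a * u b) ^ s)
        = ∑ s : {x : ℝ // x ∈ S}, (c (s:ℝ) * u b ^ (s:ℝ)) * u a ^ (s:ℝ) := by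
      intro a b
      rw [← Finset.sum_coe_sort S]
      refine Finset.sum_congr rfl fun s _ => ?_
      rw [Real.mul_rpow (hu a).le (hu b).le]; ring
    calc Matrix.det (Matrix.of fun i j : Fin N => ∑ s ∈ S, c s * (u i * u j) ^ s)
        = ∑ σ : Perm (Fin N), Equiv.Perm.sign σ •
            ∏ i, ∑ s : {x : ℝ // x ∈ S}, (c (s:ℝ) * u i ^ (s:ℝ)) * u (σ i) ^ (s:ℝ) := by
          rw [Matrix.det_apply]
          exact Finset.sum_congr rfl fun σ _ => by
            rw [show (∏ i, (Matrix.of fun i j : Fin N =>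
                ∑ s ∈ S, c s * (u i * u j) ^ s) (σ i) i) = _
              from Finset.prod_congr rfl fun i _ => hentry (σ i) i]
      _ = ∑ σ : Perm (Fin N), ∑ p : Fin N → {x : ℝ // x ∈ S}, Equiv.Perm.sign σ •
            ∏ i, ((c (p i : ℝ) * u i ^ ((p i):ℝ)) * u (σ i) ^ ((p i):ℝ)) := by
          refine Finset.sum_congr rfl fun σ _ => ?_
          rw [Finset.prod_univ_sum, smul_sum, Fintype.piFinset_univ]
      _ = ∑ p : Fin N → {x : ℝ // x ∈ S}, ∑ σ : Perm (Fin N), Equiv.Perm.sign σ •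
            ((∏ i, c (p i : ℝ) * u i ^ ((p i):ℝ)) * ∏ i, u (σ i) ^ ((p i):ℝ)) := by
          rw [Finset.sum_comm]
          refine Finset.sum_congr rfl fun p _ => Finset.sum_congr rfl fun σ _ => by
            rw [Finset.prod_mul_distrib]
      _ = ∑ p : Fin N → {x : ℝ // x ∈ S}, T p := by
          refine Finset.sum_congr rfl fun p _ => ?_
          simp only [hTdef]
          rw [Matrix.det_apply, Finset.mul_sum]
          refine Finset.sum_congr rfl fun σ _ => ?_
          simp only [Matrix.of_apply, zsmul_eq_mul, Units.smul_def]
          ring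
  -- Step 2: non-injective terms vanish
  have hT : ∀ p : Fin N → {x : ℝ // x ∈ S}, ¬ Function.Injective p → T p = 0 := by
    intro p hp
    rw [Function.not_injective_iff] at hp
    obtain ⟨a, b, hab, hne⟩ := hp
    have hdet : Matrix.det (Matrix.of fun a b : Fin N => u a ^ ((p b : ℝ))) = 0 :=
      Matrix.det_zero_of_column_eq hne fun k => by rw [Matrix.of_apply, Matrix.of_apply, hab]
    simp only [hTdef]
    rw [hdet, mul_zero]
  -- Step 3: regroup injective terms by sorted tuple and permutation
  have step3 : ∑ p : Fin N → {x : ℝ // x ∈ S}, T p =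
      ∑ n ∈ Finset.univ.filter
          (fun n : Fin N → {x : ℝ // x ∈ S} =>
            ∀ a b : Fin N, a < b → (n a : ℝ) < (n b : ℝ)),
        ∑ σ : Perm (Fin N), T (n ∘ σ) := by
    set Inc := Finset.univ.filter
        (fun n : Fin N → {x : ℝ // x ∈ S} =>
          ∀ a b : Fin N, a < b → (n a : ℝ) < (n b : ℝ)) with hInc
    have s1 : ∑ p : Fin N → {x : ℝ // x ∈ S}, T p = ∑ p ∈ Finset.univ.filter
        (fun p : Fin N → {x : ℝ // x ∈ S} => Function.Injective p), T p := by
      refine (Finset.sum_subset (Finset.filter_subset _ _) fun p _ hp => ?_).symm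
      exact hT p (by simpa using hp)
    rw [s1]
    have s2 : ∑ p ∈ Finset.univ.filter
        (fun p : Fin N → {x : ℝ // x ∈ S} => Function.Injective p), T p
        = ∑ q ∈ Inc ×ˢ (Finset.univ : Finset (Perm (Fin N))), T (q.1 ∘ q.2) := by
      refine Finset.sum_nbij' (fun p => (p ∘ Tuple.sort p, (Tuple.sort p)⁻¹))
        (fun q => q.1 ∘ ⇑q.2) ?_ ?_ ?_ ?_ ?_
      · intro p hp
        have hpinj : Function.Injective p := (Finset.mem_filter.mp hp).2
        refine Finset.mem_product.mpr ⟨?_, Finset.mem_univ _⟩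
        rw [hInc, Finset.mem_filter]
        refine ⟨Finset.mem_univ _, fun a b hab => ?_⟩
        have hmono := Tuple.monotone_sort p
        have hle : p (Tuple.sort p a) ≤ p (Tuple.sort p b) := hmono hab.le
        have hne : p (Tuple.sort p a) ≠ p (Tuple.sort p b) := fun h =>
          absurd ((Tuple.sort p).injective (hpinj h)) hab.ne
        exact Subtype.coe_lt_coe.mpr (lt_of_le_of_ne hle hne)
      · intro q hq
        obtain ⟨hq1, -⟩ := Finset.mem_product.mp hq
        rw [hInc, Finset.mem_filter] at hq1
        have hinj1 : Function.Injective q.1 := by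
          intro a b hab
          by_contra hne
          rcases Ne.lt_or_gt hne with h | h
          · exact absurd (congrArg (Subtype.val) hab) (hq1.2 a b h).ne
          · exact absurd (congrArg (Subtype.val) hab).symm (hq1.2 b a h).ne
        exact Finset.mem_filter.mpr ⟨Finset.mem_univ _, hinj1.comp q.2.injective⟩
      · intro p hp
        funext i
        simp [Function.comp, Equiv.Perm.inv_def, Equiv.apply_symm_apply]
      · intro q hq
        obtain ⟨hq1, -⟩ := Finset.mem_product.mp hq
        rw [hInc, Finset.mem_filter] at hq1
        have hsmono : StrictMono q.1 := fun a b hab => Subtype.coe_lt_coe.mp (hq1.2 a b hab)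
        have hsort : (q.2)⁻¹ = Tuple.sort (q.1 ∘ ⇑q.2) := by
          rw [Tuple.eq_sort_iff]
          constructor
          · intro a b hab
            simp only [Function.comp_apply, Equiv.Perm.inv_def, Equiv.apply_symm_apply]
            exact (hsmono.monotone hab)
          · intro i j hij h
            exfalso
            simp only [Function.comp_apply, Equiv.Perm.inv_def, Equiv.apply_symm_apply] at h
            exact absurd (hsmono.injective h) hij.ne
        refine Prod.ext ?_ ?_
        · funext i
          simp [← hsort, Function.comp, Equiv.Perm.inv_def, Equiv.apply_symm_apply]
        · simp [← hsort]
      · intro p hp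
        exact congrArg T (funext fun i => by simp [Function.comp]).symm
    rw [s2, Finset.sum_product]
  -- Step 4: evaluate the inner sum over permutations
  rw [step1, step3]
  refine Finset.sum_congr rfl fun n _ => ?_
  set A := Matrix.of fun i j : Fin N => u i ^ ((n j):ℝ) with hA
  have h1 : ∀ σ : Perm (Fin N),
      Matrix.det (Matrix.of fun a b : Fin N => u a ^ ((n (σ b)):ℝ))
        = ((Perm.sign σ : ℤ) : ℝ) * A.det := fun σ => by
    have := Matrix.det_permute' σ A
    rw [show A.submatrix id σ = Matrix.of fun a b : Fin N => u a ^ ((n (σ b)):ℝ) from rfl] at this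
    simpa using this
  have key : ∑ σ : Perm (Fin N), ((Perm.sign σ : ℤ) : ℝ) * ∏ i, u i ^ ((n (σ i)):ℝ)
      = A.det := by
    rw [← Matrix.det_transpose A, Matrix.det_apply]
    refine Finset.sum_congr rfl fun σ _ => ?_
    simp [A, Units.smul_def, Matrix.transpose_apply]
  calc ∑ σ : Perm (Fin N), T (n ∘ σ)
      = ∑ σ : Perm (Fin N), ((∏ j, c (n j : ℝ)) * A.det) *
          (((Perm.sign σ : ℤ) : ℝ) * ∏ i, u i ^ ((n (σ i)):ℝ)) := by
        refine Finset.sum_congr rfl fun σ _ => ?_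
        simp only [hTdef, Function.comp_apply]
        rw [h1 σ, Finset.prod_mul_distrib, Equiv.prod_comp σ (fun i => c (n i : ℝ))]
        ring
    _ = ((∏ j, c (n j : ℝ)) * A.det) *
          ∑ σ : Perm (Fin N), ((Perm.sign σ : ℤ) : ℝ) * ∏ i, u i ^ ((n (σ i)):ℝ) := by
        rw [← Finset.mul_sum]
    _ = A.det ^ 2 * ∏ j, c (n j : ℝ) := by rw [key]; ring
end
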